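/- Let g(t) = (at+b)/(ct+d) be a Möbius transformation with ad − bc = 1 and c ≠ 0, and let x < y be real numbers such that the pole −d/c satisfies −d/c < x. Then for any t with x < t < y one has |x−t|/|y−t| < |g(x)−g(t)|/|g(y)−g(t)| < (|y+d/c|²/|x+d/c|²) · (|x−t|/|y−t|). -/

import Mathlib

/-- Let `g(t) = (a t + b)/(c t + d)` be a Möbius transformation with
`a d − b c = 1` and `c ≠ 0`, and let `x < y` be reals with the pole `−d/c < x`.
Then for any `t` with `x < t < y`,
`|x−t|/|y−t| < |g(x)−g(t)|/|g(y)−g(t)| < (|y+d/c|²/|x+d/c|²)·(|x−t|/|y−t|)`. -/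
private lemma div_ratio_aux (k px pt py A B : ℝ) (hk : k ≠ 0) (hpx : px ≠ 0)
    (hpt : pt ≠ 0) (hpy : py ≠ 0) (hB : B ≠ 0) :
    A / (k * px * (k * pt)) / (B / (k * py * (k * pt))) = (A / B) * (py / px) := by
  field_simp

theorem mobius_distortion_pole_left (a b c d x y t : ℝ)
    (hdet : a * d - b * c = 1) (hc : c ≠ 0)
    (hpole : -d / c < x) (hxt : x < t) (hty : t < y) :
    |x - t| / |y - t| <
        |(a * x + b) / (c * x + d) - (a * t + b) / (c * t + d)| /
          |(a * y + b) / (c * y + d) - (a * t + b) / (c * t + d)| ∧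
    |(a * x + b) / (c * x + d) - (a * t + b) / (c * t + d)| /
        |(a * y + b) / (c * y + d) - (a * t + b) / (c * t + d)| <
      (|y + d / c| ^ 2 / |x + d / c| ^ 2) * (|x - t| / |y - t|) := by
  have hpole' : -(d / c) < x := by rwa [neg_div] at hpole
  have hx0 : 0 < x + d / c := by linarith
  have ht0 : 0 < t + d / c := by linarith
  have hy0 : 0 < y + d / c := by linarith
  have hfac : ∀ u : ℝ, c * u + d = c * (u + d / c) := by
    intro u; field_simp
  have hdx : c * x + d ≠ 0 := by rw [hfac]; exact mul_ne_zero hc hx0.ne'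
  have hdt : c * t + d ≠ 0 := by rw [hfac]; exact mul_ne_zero hc ht0.ne'
  have hdy : c * y + d ≠ 0 := by rw [hfac]; exact mul_ne_zero hc hy0.ne'
  have diff : ∀ p q : ℝ, c * p + d ≠ 0 → c * q + d ≠ 0 →
      (a * p + b) / (c * p + d) - (a * q + b) / (c * q + d)
        = (p - q) / ((c * p + d) * (c * q + d)) := by
    intro p q hp hq
    rw [div_sub_div _ _ hp hq]
    congr 1
    linear_combination (p - q) * hdet
  rw [diff x t hdx hdt, diff y t hdy hdt]
  rw [abs_div, abs_div, abs_mul, abs_mul, hfac x, hfac t, hfac y,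
      abs_mul, abs_mul, abs_mul, abs_of_pos hx0, abs_of_pos ht0, abs_of_pos hy0,
      abs_of_neg (by linarith : x - t < 0), abs_of_pos (by linarith : (0:ℝ) < y - t)]
  have hk : 0 < |c| := abs_pos.mpr hc
  have hE := div_ratio_aux |c| (x + d / c) (t + d / c) (y + d / c) (-(x - t)) (y - t)
    hk.ne' hx0.ne' ht0.ne' hy0.ne' (by linarith)
  rw [hE]
  have hr : 1 < (y + d / c) / (x + d / c) := (one_lt_div hx0).mpr (by linarith)
  have hb : 0 < (t - x) / (y - t) := div_pos (by linarith) (by linarith)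
  have hbase : -(x - t) / (y - t) = (t - x) / (y - t) := by ring_nf
  rw [hbase, ← div_pow]
  constructor
  · exact lt_mul_of_one_lt_right hb hr
  · have h2 : (y + d / c) / (x + d / c) < ((y + d / c) / (x + d / c)) ^ 2 := by nlinarith
    nlinarith [mul_lt_mul_of_pos_left h2 hb]
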